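/- In the mixed game where firms A, B, C choose prices and firm D chooses its output, with c_A = c_B = c_C, the equilibrium outputs coincide with those of the all-prices (Bertrand) equilibrium: x_A = x_B = x_C = (3 b² c_D + b c_D + 4 b² c_A - 5 b c_A - 3 c_A - 7 a b² + 4 a b + 3 a) / (2 (1 - b)(b + 1)(7 b + 3)) and x_D = (3 a - 2 b² c_D - 7 b c_D - 3 c_D + 9 b² c_A + 3 b c_A - 7 a b² + 4 a b) / (2 (1 - b)(b + 1)(7 b + 3)). -/

import Mathlib

set_option maxHeartbeats 1600000

/-- Outputs of A, B, C and price of D as functions of `(pA, pB, pC, xD)`. -/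
noncomputable def xAmp (a b pA pB pC xD : ℝ) : ℝ :=
  ((1 - b)*a + b^2*xD - b*xD + b*pC + b*pB - b*pA - pA)/((1 - b)*(2*b + 1))
noncomputable def xBmp (a b pA pB pC xD : ℝ) : ℝ :=
  ((1 - b)*a + b^2*xD - b*xD + b*pC - b*pB - pB + b*pA)/((1 - b)*(2*b + 1))
noncomputable def xCmp (a b pA pB pC xD : ℝ) : ℝ :=
  ((1 - b)*a + b^2*xD - b*xD - b*pC - pC + b*pB + b*pA)/((1 - b)*(2*b + 1))
noncomputable def pDmp (a b pA pB pC xD : ℝ) : ℝ :=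
  ((1 - b)*a + 3*b^2*xD - 2*b*xD - xD + b*pC + b*pB + b*pA)/(2*b + 1)

noncomputable def piAmp (a b cA pA pB pC xD : ℝ) : ℝ := (pA - cA) * xAmp a b pA pB pC xD
noncomputable def piBmp (a b cB pA pB pC xD : ℝ) : ℝ := (pB - cB) * xBmp a b pA pB pC xD
noncomputable def piCmp (a b cC pA pB pC xD : ℝ) : ℝ := (pC - cC) * xCmp a b pA pB pC xD
noncomputable def piDmp (a b cD pA pB pC xD : ℝ) : ℝ := (pDmp a b pA pB pC xD - cD) * xD

noncomputable def phiAmp (a b cA cB cC cD pA pB pC xD : ℝ) : ℝ :=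
  piAmp a b cA pA pB pC xD -
    (piBmp a b cB pA pB pC xD + piCmp a b cC pA pB pC xD + piDmp a b cD pA pB pC xD)/3
noncomputable def phiBmp (a b cA cB cC cD pA pB pC xD : ℝ) : ℝ :=
  piBmp a b cB pA pB pC xD -
    (piAmp a b cA pA pB pC xD + piCmp a b cC pA pB pC xD + piDmp a b cD pA pB pC xD)/3
noncomputable def phiCmp (a b cA cB cC cD pA pB pC xD : ℝ) : ℝ :=
  piCmp a b cC pA pB pC xD -
    (piAmp a b cA pA pB pC xD + piBmp a b cB pA pB pC xD + piDmp a b cD pA pB pC xD)/3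
noncomputable def phiDmp (a b cA cB cC cD pA pB pC xD : ℝ) : ℝ :=
  piDmp a b cD pA pB pC xD -
    (piAmp a b cA pA pB pC xD + piBmp a b cB pA pB pC xD + piCmp a b cC pA pB pC xD)/3

lemma quad_deriv' (A B p : ℝ) : deriv (fun x : ℝ => A*x^2 + B*x) p = 2*A*p + B := by
  have h1 : HasDerivAt (fun x : ℝ => A*x^2 + B*x) (A*(2*p^1) + B*1) p :=
    ((hasDerivAt_pow 2 p).const_mul A).add ((hasDerivAt_id p).const_mul B)
  rw [h1.deriv]; ring

/-- Mixed game (A, B, C choose prices, D chooses its output): the equilibrium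
outputs coincide with the Bertrand ones. -/
theorem mixed_price_quantity_equilibrium (a b cA cB cC cD pA pB pC xD : ℝ)
    (hb0 : 0 < b) (hb1 : b < 1) (hcB : cB = cA) (hcC : cC = cA)
    (hA : deriv (fun p => phiAmp a b cA cB cC cD p pB pC xD) pA = 0)
    (hB : deriv (fun p => phiBmp a b cA cB cC cD pA p pC xD) pB = 0)
    (hC : deriv (fun p => phiCmp a b cA cB cC cD pA pB p xD) pC = 0)
    (hD : deriv (fun x => phiDmp a b cA cB cC cD pA pB pC x) xD = 0) :
    xAmp a b pA pB pC xD =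
      (3*b^2*cD + b*cD + 4*b^2*cA - 5*b*cA - 3*cA - 7*a*b^2 + 4*a*b + 3*a) /
        (2*(1 - b)*(b + 1)*(7*b + 3)) ∧
    xBmp a b pA pB pC xD =
      (3*b^2*cD + b*cD + 4*b^2*cA - 5*b*cA - 3*cA - 7*a*b^2 + 4*a*b + 3*a) /
        (2*(1 - b)*(b + 1)*(7*b + 3)) ∧
    xCmp a b pA pB pC xD =
      (3*b^2*cD + b*cD + 4*b^2*cA - 5*b*cA - 3*cA - 7*a*b^2 + 4*a*b + 3*a) /
        (2*(1 - b)*(b + 1)*(7*b + 3)) ∧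
    xD = (3*a - 2*b^2*cD - 7*b*cD - 3*cD + 9*b^2*cA + 3*b*cA - 7*a*b^2 + 4*a*b) /
        (2*(1 - b)*(b + 1)*(7*b + 3)) := by
  have h1b : (1:ℝ) - b ≠ 0 := by linarith
  have h2b : (2*b + 1 : ℝ) ≠ 0 := by linarith
  have hbp : (b + 1 : ℝ) ≠ 0 := by linarith
  have h7b : (7*b + 3 : ℝ) ≠ 0 := by linarith
  have hk : (3*((1 - b)*(2*b + 1)) : ℝ) ≠ 0 := by
    have : (0:ℝ) < 3*((1 - b)*(2*b + 1)) := by nlinarith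
    exact this.ne'
  have eA : (fun p => phiAmp a b cA cB cC cD p pB pC xD)
      = fun p => ((-3 - 3*b)*p^2 +
          (3*cA - 4*b*xD + 2*b*pC + 2*b*pB + b*cC + b*cB + 3*b*cA + 4*b^2*xD + 3*a - 3*a*b)*p)
            /(3*((1 - b)*(2*b + 1)))
        + phiAmp a b cA cB cC cD 0 pB pC xD := by
    funext p
    simp only [phiAmp, piAmp, piBmp, piCmp, piDmp, xAmp, xBmp, xCmp, pDmp]
    field_simp
    ring
  have eB : (fun p => phiBmp a b cA cB cC cD pA p pC xD)
      = fun p => ((-3 - 3*b)*p^2 +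
          (3*cB - 4*b*xD + 2*b*pC + 2*b*pA + b*cC + 3*b*cB + b*cA + 4*b^2*xD + 3*a - 3*a*b)*p)
            /(3*((1 - b)*(2*b + 1)))
        + phiBmp a b cA cB cC cD pA 0 pC xD := by
    funext p
    simp only [phiBmp, piAmp, piBmp, piCmp, piDmp, xAmp, xBmp, xCmp, pDmp]
    field_simp
    ring
  have eC : (fun p => phiCmp a b cA cB cC cD pA pB p xD)
      = fun p => ((-3 - 3*b)*p^2 +
          (3*cC - 4*b*xD + 2*b*pB + 2*b*pA + 3*b*cC + b*cB + b*cA + 4*b^2*xD + 3*a - 3*a*b)*p)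
            /(3*((1 - b)*(2*b + 1)))
        + phiCmp a b cA cB cC cD pA pB 0 xD := by
    funext p
    simp only [phiCmp, piAmp, piBmp, piCmp, piDmp, xAmp, xBmp, xCmp, pDmp]
    field_simp
    ring
  have eD : (fun x => phiDmp a b cA cB cC cD pA pB pC x)
      = fun x => ((-3 - 3*b + 15*b^2 - 9*b^3)*x^2 +
          (-3*cD + 4*b*pC + 4*b*pB + 4*b*pA - 3*b*cD - b*cC - b*cB - b*cA
            - 4*b^2*pC - 4*b^2*pB - 4*b^2*pA + 6*b^2*cD + b^2*cC + b^2*cB + b^2*cA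
            + 3*a - 6*a*b + 3*a*b^2)*x)
            /(3*((1 - b)*(2*b + 1)))
        + phiDmp a b cA cB cC cD pA pB pC 0 := by
    funext x
    simp only [phiDmp, piAmp, piBmp, piCmp, piDmp, xAmp, xBmp, xCmp, pDmp]
    field_simp
    ring
  rw [eA, ] at hA
  rw [deriv_add_const, deriv_div_const, quad_deriv'] at hA
  have FA := (div_eq_zero_iff.mp hA).resolve_right hk
  rw [eB] at hB
  rw [deriv_add_const, deriv_div_const, quad_deriv'] at hB
  have FB := (div_eq_zero_iff.mp hB).resolve_right hk
  rw [eC] at hC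
  rw [deriv_add_const, deriv_div_const, quad_deriv'] at hC
  have FC := (div_eq_zero_iff.mp hC).resolve_right hk
  rw [eD] at hD
  rw [deriv_add_const, deriv_div_const, quad_deriv'] at hD
  have FD := (div_eq_zero_iff.mp hD).resolve_right hk
  rw [hcB, hcC] at FA FB FC FD
  have hpB : pB = pA := by
    have h : (6 + 8*b)*(pB - pA) = 0 := by linear_combination FA - FB
    rcases mul_eq_zero.mp h with h' | h'
    · nlinarith
    · linarith
  have hpC : pC = pA := by
    have h : (6 + 8*b)*(pC - pA) = 0 := by linear_combination FB - FC + (6 + 8*b)*hpB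
    rcases mul_eq_zero.mp h with h' | h'
    · nlinarith
    · linarith
  rw [hpB, hpC] at FA FD
  have hdet : (36 + 48*b - 120*b^2 - 48*b^3 + 84*b^4 : ℝ) ≠ 0 := by
    have h1 : (0:ℝ) < 1 - b := by linarith
    have h2 : (0:ℝ) < 1 + b := by linarith
    have h3 : (0:ℝ) < 7*b + 3 := by linarith
    have : (0:ℝ) < 36 + 48*b - 120*b^2 - 48*b^3 + 84*b^4 := by
      nlinarith [mul_pos (mul_pos (mul_pos h1 h1) h2) h3]
    exact this.ne'
  have hxDv : xD = (-18*cD - 24*b*cD + 18*b*cA + 30*b^2*cD + 36*b^2*cA + 12*b^3*cD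
      - 54*b^3*cA + 18*a + 6*a*b - 66*a*b^2 + 42*a*b^3)
        / (36 + 48*b - 120*b^2 - 48*b^3 + 84*b^4) := by
    rw [eq_div_iff hdet]
    linear_combination (-6 - 2*b)*FD - (12*b - 12*b^2)*FA
  have hpAv : pA = (18*cA + 12*b*cD + 48*b*cA - 48*b^2*cA - 36*b^3*cD - 120*b^3*cA
      + 24*b^4*cD + 102*b^4*cA + 18*a - 12*a*b - 72*a*b^2 + 108*a*b^3 - 42*a*b^4)
        / (36 + 48*b - 120*b^2 - 48*b^3 + 84*b^4) := by
    rw [eq_div_iff hdet]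
    linear_combination (-6 - 6*b + 30*b^2 - 18*b^3)*FA - (-4*b + 4*b^2)*FD
  refine ⟨?_, ?_, ?_, ?_⟩
  · rw [xAmp, hpB, hpC, hpAv, hxDv]
    have h12 : (12:ℝ) ≠ 0 := by norm_num
    have hf : (36 + 48*b - 120*b^2 - 48*b^3 + 84*b^4 : ℝ) = 12*((1-b)^2*(b+1)*(7*b+3)) := by ring
    rw [hf]; field_simp; ring
  · rw [xBmp, hpB, hpC, hpAv, hxDv]
    have h12 : (12:ℝ) ≠ 0 := by norm_num
    have hf : (36 + 48*b - 120*b^2 - 48*b^3 + 84*b^4 : ℝ) = 12*((1-b)^2*(b+1)*(7*b+3)) := by ring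
    rw [hf]; field_simp; ring
  · rw [xCmp, hpB, hpC, hpAv, hxDv]
    have h12 : (12:ℝ) ≠ 0 := by norm_num
    have hf : (36 + 48*b - 120*b^2 - 48*b^3 + 84*b^4 : ℝ) = 12*((1-b)^2*(b+1)*(7*b+3)) := by ring
    rw [hf]; field_simp; ring
  · rw [hxDv, div_eq_div_iff hdet (by nlinarith : (2*(1 - b)*(b + 1)*(7*b + 3) : ℝ) ≠ 0)]
    ring
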